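/- Let Γ be a finite simple graph and I a subset of vertices such that contracting I to a single vertex V_I yields graph Γ_I. Suppose O^1 and O^2 are acyclic orientations of Γ agreeing with a fixed acyclic orientation on I (with linear extension v_1 ⋯ v_k of the induced order on I), inducing acyclic orientations O^1_{Γ_I}, O^2_{Γ_I} of Γ_I. If c_I is a click-sequence from O^1_{Γ_I} to O^2_{Γ_I}, then the sequence obtained by replacing each occurrence of V_I in c_I by the block v_1 v_2 ⋯ v_k is a click-sequence from O^1 to O^2. -/

import Mathlib

variable {V : Type*}

/-- An acyclic orientation of a simple graph `G`. -/
structure AcyclicOrientation (G : SimpleGraph V) where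
  dir : V → V → Prop
  dir_adj : ∀ {a b : V}, dir a b → G.Adj a b
  total : ∀ {a b : V}, G.Adj a b → dir a b ∨ dir b a
  acyclic : ∀ a : V, ¬ Relation.TransGen dir a a

namespace AcyclicOrientation

variable {G : SimpleGraph V}

/-- `v` is a source: no edge points into `v`. -/
def IsSource (O : AcyclicOrientation G) (v : V) : Prop := ∀ a, ¬ O.dir a v

/-- `O'` is obtained from `O` by converting the source `v` into a sink. -/
def ClickAt (O : AcyclicOrientation G) (v : V) (O' : AcyclicOrientation G) : Prop :=
  O.IsSource v ∧ ∀ a b, (O'.dir a b ↔ (((a = v ∨ b = v) ∧ O.dir b a) ∨ (a ≠ v ∧ b ≠ v ∧ O.dir a b)))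

/-- One source-to-sink conversion relates `O` and `O'`. -/
def IsClick (O O' : AcyclicOrientation G) : Prop := ∃ v, O.ClickAt v O'

/-- Click-equivalence: reachability by a finite sequence of clicks. -/
def ClickEquiv (O O' : AcyclicOrientation G) : Prop :=
  Relation.ReflTransGen IsClick O O'

/-- `ClickSeq O c O'` : the list `c` is a click-sequence applicable to `O` with result `O'`. -/
inductive ClickSeq : AcyclicOrientation G → List V → AcyclicOrientation G → Prop
  | nil (O : AcyclicOrientation G) : ClickSeq O [] O
  | cons {O O' O'' : AcyclicOrientation G} {v : V} {c : List V} :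
      O.ClickAt v O' → ClickSeq O' c O'' → ClickSeq O (v :: c) O''

open scoped Classical in
/-- `ν_P(O)`: forward minus backward edges of the closed walk `p` under `O`. -/
noncomputable def nu (O : AcyclicOrientation G) {u : V} (p : G.Walk u u) : ℤ :=
  (p.darts.map (fun d => if O.dir d.toProd.1 d.toProd.2 then (1 : ℤ) else -1)).sum

/-- The `vw`-interval: vertices on a directed path from `v` to `w`. -/
def interval (O : AcyclicOrientation G) (v w : V) : Set V :=
  {a | Relation.ReflTransGen O.dir v a ∧ Relation.ReflTransGen O.dir a w}

end AcyclicOrientation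

open AcyclicOrientation

/-- The setoid of click-equivalence (equivalence relation generated by clicks). -/
def clickSetoid (G : SimpleGraph V) : Setoid (AcyclicOrientation G) :=
  ⟨Relation.EqvGen IsClick, Relation.EqvGen.is_equivalence _⟩

/-- `κ(G)`: the number of click-equivalence classes of acyclic orientations. -/
noncomputable def kappa (G : SimpleGraph V) : ℕ :=
  Nat.card (Quotient (clickSetoid G))

/-- The graph obtained from `G` by contracting the vertex set `I` to the single vertex `vI ∈ I`
(vertices of `I` other than `vI` become isolated). -/
def contractGraph (G : SimpleGraph V) (I : Set V) (vI : V) : SimpleGraph V where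
  Adj a b := a ≠ b ∧
    ((a ∉ I ∧ b ∉ I ∧ G.Adj a b) ∨
     (a = vI ∧ b ∉ I ∧ ∃ x ∈ I, G.Adj x b) ∨
     (b = vI ∧ a ∉ I ∧ ∃ x ∈ I, G.Adj x a))
  symm := by
    constructor
    rintro a b ⟨hne, h⟩
    refine ⟨hne.symm, ?_⟩
    rcases h with ⟨ha, hb, hadj⟩ | ⟨ha, hb, x, hx, hadj⟩ | ⟨hb, ha, x, hx, hadj⟩
    · exact Or.inl ⟨hb, ha, hadj.symm⟩
    · exact Or.inr (Or.inr ⟨ha, hb, x, hx, hadj⟩)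
    · exact Or.inr (Or.inl ⟨hb, ha, x, hx, hadj⟩)
  loopless := by constructor; rintro a ⟨hne, -⟩; exact hne rfl

/-- The orientation of the contracted graph induced by an orientation `O` of `G`. -/
def contractDir {G : SimpleGraph V} (O : AcyclicOrientation G) (I : Set V) (vI : V) :
    V → V → Prop := fun a b =>
  (a ∉ I ∧ b ∉ I ∧ O.dir a b) ∨
  (a = vI ∧ b ∉ I ∧ ∃ x ∈ I, O.dir x b) ∨
  (b = vI ∧ a ∉ I ∧ ∃ x ∈ I, O.dir a x)

/-- The orientation `i → j` iff `i` precedes `j` in the list `l`. -/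
def permDir (G : SimpleGraph V) [DecidableEq V] (l : List V) : V → V → Prop :=
  fun i j => G.Adj i j ∧ l.idxOf i < l.idxOf j
section AuxLemmas

variable {G : SimpleGraph V}

theorem AcyclicOrientation.ext' {O O' : AcyclicOrientation G}
    (h : ∀ a b, O.dir a b ↔ O'.dir a b) : O = O' := by
  obtain ⟨d, da, t, ac⟩ := O
  obtain ⟨d', da', t', ac'⟩ := O'
  have hd : d = d' := by funext a b; exact propext (h a b)
  subst hd
  rfl

theorem AcyclicOrientation.dir_irrefl (O : AcyclicOrientation G) (a : V) : ¬ O.dir a a :=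
  fun h => G.irrefl (O.dir_adj h)

theorem AcyclicOrientation.ClickSeq.append {O O' O'' : AcyclicOrientation G} {l1 l2 : List V}
    (h1 : ClickSeq O l1 O') (h2 : ClickSeq O' l2 O'') : ClickSeq O (l1 ++ l2) O'' := by
  revert h2
  induction h1 with
  | nil O => intro h2; simpa using h2
  | cons hc _ ih => intro h2; exact ClickSeq.cons hc (ih h2)

/-- Clicking a source yields an acyclic orientation. -/
def AcyclicOrientation.click (O : AcyclicOrientation G) (v : V) (hv : O.IsSource v) :
    AcyclicOrientation G where
  dir a b := ((a = v ∨ b = v) ∧ O.dir b a) ∨ (a ≠ v ∧ b ≠ v ∧ O.dir a b)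
  dir_adj := by rintro a b (⟨_, h⟩ | ⟨_, _, h⟩); exacts [(O.dir_adj h).symm, O.dir_adj h]
  total := by
    intro a b hab
    rcases O.total hab with h1 | h1
    · by_cases hav : a = v
      · exact Or.inr (Or.inl ⟨Or.inr hav, h1⟩)
      · by_cases hbv : b = v
        · exact Or.inr (Or.inl ⟨Or.inl hbv, h1⟩)
        · exact Or.inl (Or.inr ⟨hav, hbv, h1⟩)
    · by_cases hav : a = v
      · exact Or.inl (Or.inl ⟨Or.inl hav, h1⟩)
      · by_cases hbv : b = v
        · exact Or.inl (Or.inl ⟨Or.inr hbv, h1⟩)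
        · exact Or.inr (Or.inr ⟨hbv, hav, h1⟩)
  acyclic := by
    set d' : V → V → Prop := fun a b =>
      ((a = v ∨ b = v) ∧ O.dir b a) ∨ (a ≠ v ∧ b ≠ v ∧ O.dir a b) with hd'
    have hnov : ∀ y, ¬ d' v y := by
      rintro y (⟨_, h⟩ | ⟨h, _, _⟩)
      · exact hv y h
      · exact h rfl
    have hnotg : ∀ b, ¬ Relation.TransGen d' v b := by
      intro b hb
      obtain ⟨c, hc, -⟩ := Relation.TransGen.head'_iff.mp hb
      exact hnov c hc
    have hstep : ∀ a b, d' a b → b ≠ v → a ≠ v ∧ O.dir a b := by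
      rintro a b (⟨hav | hbv, h⟩ | ⟨ha, _, h⟩) hb
      · subst hav; exact absurd h (hv b)
      · exact absurd hbv hb
      · exact ⟨ha, h⟩
    have key : ∀ a b, Relation.TransGen d' a b → b ≠ v → Relation.TransGen O.dir a b := by
      intro a b hab
      induction hab with
      | single h => intro hb; exact Relation.TransGen.single (hstep _ _ h hb).2
      | tail _ hlast ih =>
        intro hb
        obtain ⟨hcv, hcb⟩ := hstep _ _ hlast hb
        exact (ih hcv).tail hcb
    intro a ha
    by_cases hav : a = v
    · exact hnotg a (hav ▸ ha)
    · exact O.acyclic a (key a a ha hav)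

theorem AcyclicOrientation.clickAt_click (O : AcyclicOrientation G) (v : V)
    (hv : O.IsSource v) : O.ClickAt v (O.click v hv) :=
  ⟨hv, fun _ _ => Iff.rfl⟩

/-- Flipping all edges across the cut of `I`, when all cut edges leave `I`,
yields an acyclic orientation. -/
def AcyclicOrientation.flipCut (O : AcyclicOrientation G) (I : Set V)
    (hsrc : ∀ a ∉ I, ∀ x ∈ I, ¬ O.dir a x) : AcyclicOrientation G where
  dir a b := (¬(a ∈ I ↔ b ∈ I) ∧ O.dir b a) ∨ ((a ∈ I ↔ b ∈ I) ∧ O.dir a b)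
  dir_adj := by rintro a b (⟨_, h⟩ | ⟨_, h⟩); exacts [(O.dir_adj h).symm, O.dir_adj h]
  total := by
    intro a b hab
    by_cases hiff : a ∈ I ↔ b ∈ I
    · rcases O.total hab with h | h
      · exact Or.inl (Or.inr ⟨hiff, h⟩)
      · exact Or.inr (Or.inr ⟨hiff.symm, h⟩)
    · rcases O.total hab with h | h
      · exact Or.inr (Or.inl ⟨fun hh => hiff hh.symm, h⟩)
      · exact Or.inl (Or.inl ⟨hiff, h⟩)
  acyclic := by
    set d' : V → V → Prop := fun a b =>
      (¬(a ∈ I ↔ b ∈ I) ∧ O.dir b a) ∨ ((a ∈ I ↔ b ∈ I) ∧ O.dir a b) with hd'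
    have keyI : ∀ a b, Relation.TransGen d' a b → a ∈ I → b ∈ I ∧ Relation.TransGen O.dir a b := by
      intro a b hab
      induction hab using Relation.TransGen.head_induction_on with
      | single h =>
        rename_i x
        intro hx
        rcases h with ⟨hne, h⟩ | ⟨hiff, h⟩
        · exact absurd h (hsrc b (fun hb => hne ⟨fun _ => hb, fun _ => hx⟩) x hx)
        · exact ⟨hiff.mp hx, Relation.TransGen.single h⟩
      | head hac htr ih =>
        rename_i x c
        intro hx
        rcases hac with ⟨hne, h⟩ | ⟨hiff, h⟩
        · exact absurd h (hsrc c (fun hc => hne ⟨fun _ => hc, fun _ => hx⟩) x hx)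
        · obtain ⟨hb, htr2⟩ := ih (hiff.mp hx)
          exact ⟨hb, Relation.TransGen.head h htr2⟩
    have keyO : ∀ a b, Relation.TransGen d' a b → a ∉ I → b ∉ I →
        Relation.TransGen O.dir a b := by
      intro a b hab
      induction hab using Relation.TransGen.head_induction_on with
      | single h =>
        rename_i x
        intro hx hb
        rcases h with ⟨hne, _⟩ | ⟨_, h⟩
        · exact absurd ⟨fun hh => absurd hh hx, fun hh => absurd hh hb⟩ hne
        · exact Relation.TransGen.single h
      | head hac htr ih =>
        rename_i x c
        intro hx hb
        by_cases hc : c ∈ I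
        · exact absurd ((keyI _ _ htr hc).1) hb
        · rcases hac with ⟨hne, _⟩ | ⟨_, h⟩
          · exact absurd ⟨fun hh => absurd hh hx, fun hh => absurd hh hc⟩ hne
          · exact Relation.TransGen.head h (ih hc hb)
    intro a ha
    by_cases haI : a ∈ I
    · exact O.acyclic a (keyI a a ha haI).2
    · exact O.acyclic a (keyO a a ha haI haI)

end AuxLemmas

section Helper
variable {G : SimpleGraph V} [DecidableEq V]

theorem clickSeq_of_list (O₁ : AcyclicOrientation G) (I : Set V)
    (hsrc : ∀ a ∉ I, ∀ x ∈ I, ¬ O₁.dir a x) :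
    ∀ (l : List V) (P : List V) (O O' : AcyclicOrientation G),
    l.Nodup →
    (∀ x : V, (x ∈ P ∨ x ∈ l) ↔ x ∈ I) →
    (∀ x ∈ P, x ∉ l) →
    (∀ p ∈ P, ∀ q ∈ l, ¬ O₁.dir q p) →
    (∀ a ∈ l, ∀ b ∈ l, O₁.dir a b → l.idxOf a < l.idxOf b) →
    (∀ a b, O.dir a b ↔ ((¬(a ∈ P ↔ b ∈ P) ∧ O₁.dir b a) ∨ ((a ∈ P ↔ b ∈ P) ∧ O₁.dir a b))) →
    (∀ a b, O'.dir a b ↔ ((¬(a ∈ I ↔ b ∈ I) ∧ O₁.dir b a) ∨ ((a ∈ I ↔ b ∈ I) ∧ O₁.dir a b))) →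
    ClickSeq O l O' := by
  intro l
  induction l with
  | nil =>
    intro P O O' _ hcov _ _ _ hO hO'
    have hPI : ∀ x : V, x ∈ P ↔ x ∈ I := by
      intro x
      rw [← hcov x]
      simp
    have : O = O' := by
      apply AcyclicOrientation.ext'
      intro a b
      rw [hO, hO', hPI a, hPI b]
    rw [this]
    exact ClickSeq.nil O'
  | cons q l' ih =>
    intro P O O' hnd hcov hdisj hPl hord hO hO'
    have hqI : q ∈ I := (hcov q).mp (Or.inr (List.mem_cons_self))
    have hqP : q ∉ P := fun hq => hdisj q hq (List.mem_cons_self)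
    have hql' : q ∉ l' := (List.nodup_cons.mp hnd).1
    have hnd' : l'.Nodup := (List.nodup_cons.mp hnd).2
    -- q is a source of O
    have hsq : O.IsSource q := by
      intro a hdir
      rw [hO] at hdir
      rcases hdir with ⟨hne, hdir⟩ | ⟨hiff, hdir⟩
      · -- a ∈ P, O₁.dir q a
        have haP : a ∈ P := by
          by_contra haP
          exact hne ⟨fun hh => absurd hh haP, fun hh => absurd hh hqP⟩
        exact hPl a haP q (List.mem_cons_self) hdir
      · -- a ∉ P, O₁.dir a q
        have haP : a ∉ P := fun hh => hqP (hiff.mp hh)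
        by_cases haI : a ∈ I
        · have hal : a ∈ q :: l' := ((hcov a).mpr haI).resolve_left haP
          rcases List.mem_cons.mp hal with rfl | hal'
          · exact O₁.dir_irrefl a hdir
          · have := hord a (List.mem_cons_of_mem _ hal') q (List.mem_cons_self) hdir
            simp [List.idxOf_cons_self] at this
        · exact hsrc a haI q hqI hdir
    -- click q
    refine ClickSeq.cons (O.clickAt_click q hsq) (ih (q :: P) (O.click q hsq) O' hnd' ?_ ?_ ?_ ?_ ?_ hO')
    · intro x
      rw [← hcov x]
      simp only [List.mem_cons]
      tauto
    · intro x hx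
      rcases List.mem_cons.mp hx with rfl | hxP
      · exact hql'
      · exact fun hh => hdisj x hxP (List.mem_cons_of_mem _ hh)
    · intro p hp q' hq'
      rcases List.mem_cons.mp hp with rfl | hpP
      · intro hdir
        have := hord q' (List.mem_cons_of_mem _ hq') p (List.mem_cons_self) hdir
        simp [List.idxOf_cons_self] at this
      · exact hPl p hpP q' (List.mem_cons_of_mem _ hq')
    · intro a ha b hb hdir
      have haq : a ≠ q := fun hh => hql' (hh ▸ ha)
      have hbq : b ≠ q := fun hh => hql' (hh ▸ hb)
      have := hord a (List.mem_cons_of_mem _ ha) b (List.mem_cons_of_mem _ hb) hdir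
      rwa [List.idxOf_cons_ne _ (Ne.symm haq), List.idxOf_cons_ne _ (Ne.symm hbq),
        Nat.succ_lt_succ_iff] at this
    · intro a b
      have h1 := hO a b
      have h2 := hO b a
      show (((a = q ∨ b = q) ∧ O.dir b a) ∨ (a ≠ q ∧ b ≠ q ∧ O.dir a b)) ↔ _
      simp only [List.mem_cons]
      clear hO hO' hord hPl hdisj hcov hsrc hsq hnd hnd' hql' ih
      by_cases haq : a = q <;> by_cases hbq : b = q <;>
        by_cases haP : a ∈ P <;> by_cases hbP : b ∈ P <;>
        simp_all
end Helper
set_option maxHeartbeats 1000000 in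
theorem contract_click_eq_aux (D : V → V → Prop) (I : Set V) (vI v : V)
    (hvI : vI ∈ I) (hv : v ∉ I) (hirr : ∀ x, ¬ D x x) (a b : V) :
    ((a ∉ I ∧ b ∉ I ∧ (((a = v ∨ b = v) ∧ D b a) ∨ (a ≠ v ∧ b ≠ v ∧ D a b))) ∨
      (a = vI ∧ b ∉ I ∧ ∃ x ∈ I, ((x = v ∨ b = v) ∧ D b x) ∨ (x ≠ v ∧ b ≠ v ∧ D x b)) ∨
      (b = vI ∧ a ∉ I ∧ ∃ x ∈ I, ((a = v ∨ x = v) ∧ D x a) ∨ (a ≠ v ∧ x ≠ v ∧ D a x))) ↔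
    (((a = v ∨ b = v) ∧ ((b ∉ I ∧ a ∉ I ∧ D b a) ∨ (b = vI ∧ a ∉ I ∧ ∃ x ∈ I, D x a) ∨
        (a = vI ∧ b ∉ I ∧ ∃ x ∈ I, D b x))) ∨
      (a ≠ v ∧ b ≠ v ∧ ((a ∉ I ∧ b ∉ I ∧ D a b) ∨ (a = vI ∧ b ∉ I ∧ ∃ x ∈ I, D x b) ∨
        (b = vI ∧ a ∉ I ∧ ∃ x ∈ I, D a x)))) := by
  have hIv : ∀ x, x ∈ I → ¬ x = v := fun x hx hh => hv (hh ▸ hx)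
  by_cases hav : a = v <;> by_cases hbv : b = v <;>
    simp_all (config := { contextual := true }) <;> aesop

set_option maxHeartbeats 1000000 in
theorem contract_flip_eq_aux (D : V → V → Prop) (I : Set V) (vI : V)
    (hvI : vI ∈ I) (a b : V) :
    ((a ∉ I ∧ b ∉ I ∧ ((¬(a ∈ I ↔ b ∈ I) ∧ D b a) ∨ ((a ∈ I ↔ b ∈ I) ∧ D a b))) ∨
      (a = vI ∧ b ∉ I ∧ ∃ x ∈ I, (¬(x ∈ I ↔ b ∈ I) ∧ D b x) ∨ ((x ∈ I ↔ b ∈ I) ∧ D x b)) ∨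
      (b = vI ∧ a ∉ I ∧ ∃ x ∈ I, (¬(a ∈ I ↔ x ∈ I) ∧ D x a) ∨ ((a ∈ I ↔ x ∈ I) ∧ D a x))) ↔
    (((a = vI ∨ b = vI) ∧ ((b ∉ I ∧ a ∉ I ∧ D b a) ∨ (b = vI ∧ a ∉ I ∧ ∃ x ∈ I, D x a) ∨
        (a = vI ∧ b ∉ I ∧ ∃ x ∈ I, D b x))) ∨
      (a ≠ vI ∧ b ≠ vI ∧ ((a ∉ I ∧ b ∉ I ∧ D a b) ∨ (a = vI ∧ b ∉ I ∧ ∃ x ∈ I, D x b) ∨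
        (b = vI ∧ a ∉ I ∧ ∃ x ∈ I, D a x)))) := by
  by_cases hav : a = vI <;> by_cases hbv : b = vI <;>
    by_cases ha : a ∈ I <;> by_cases hb : b ∈ I <;>
    simp_all (config := { contextual := true }) <;> aesop

theorem contract_click_eq {G : SimpleGraph V} (O : AcyclicOrientation G) (I : Set V) (vI : V)
    (hvI : vI ∈ I) (v : V) (hv : v ∉ I) (hsv : O.IsSource v) (a b : V) :
    contractDir (O.click v hsv) I vI a b ↔
      (((a = v ∨ b = v) ∧ contractDir O I vI b a) ∨
        (a ≠ v ∧ b ≠ v ∧ contractDir O I vI a b)) :=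
  contract_click_eq_aux O.dir I vI v hvI hv O.dir_irrefl a b

theorem contract_flip_eq {G : SimpleGraph V} (O : AcyclicOrientation G) (I : Set V) (vI : V)
    (hvI : vI ∈ I) (hsrc : ∀ a ∉ I, ∀ x ∈ I, ¬ O.dir a x) (a b : V) :
    contractDir (O.flipCut I hsrc) I vI a b ↔
      (((a = vI ∨ b = vI) ∧ contractDir O I vI b a) ∨
        (a ≠ vI ∧ b ≠ vI ∧ contractDir O I vI a b)) :=
  contract_flip_eq_aux O.dir I vI hvI a b

/-- Replacing each occurrence of the contracted vertex `V_I` in a click-sequence over `Γ_I` by the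
block `v₁ v₂ ⋯ v_k` (a linear extension of `I`) yields a click-sequence over `Γ`. -/
theorem expand_contracted_click_sequence [Fintype V] [DecidableEq V] (G : SimpleGraph V)
    (I : Set V) (vI : V) (hvI : vI ∈ I)
    (L : List V) (hnodup : L.Nodup) (hmem : ∀ x, x ∈ L ↔ x ∈ I)
    (O₁ O₂ : AcyclicOrientation G)
    (hagree : ∀ a ∈ I, ∀ b ∈ I, (O₁.dir a b ↔ O₂.dir a b))
    (hlin : ∀ a ∈ I, ∀ b ∈ I, O₁.dir a b → L.idxOf a < L.idxOf b)
    (O₁I O₂I : AcyclicOrientation (contractGraph G I vI))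
    (e1 : ∀ a b, O₁I.dir a b ↔ contractDir O₁ I vI a b)
    (e2 : ∀ a b, O₂I.dir a b ↔ contractDir O₂ I vI a b)
    (cI : List V) (hcI : ∀ x ∈ cI, x = vI ∨ x ∉ I)
    (h : ClickSeq O₁I cI O₂I) :
    ClickSeq O₁ (cI.flatMap (fun x => if x = vI then L else [x])) O₂ := by
  revert hagree hlin e1 e2 hcI
  revert O₁
  induction h with
  | nil OI =>
    intro O₁ hagree hlin e1 e2 hcI
    have key : ∀ (P Q : AcyclicOrientation G),
        (∀ a ∈ I, ∀ b ∈ I, P.dir a b → Q.dir a b) →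
        (∀ x y, contractDir P I vI x y → contractDir Q I vI x y) →
        (∀ x, ¬ (contractDir Q I vI vI x ∧ contractDir Q I vI x vI)) →
        ∀ a b, P.dir a b → Q.dir a b := by
      intro P Q hag hct hn2 a b hP
      have hadj := P.dir_adj hP
      by_cases ha : a ∈ I <;> by_cases hb : b ∈ I
      · exact hag a ha b hb hP
      · rcases Q.total hadj with hQ | hQ
        · exact hQ
        · exact absurd ⟨hct vI b (Or.inr (Or.inl ⟨rfl, hb, a, ha, hP⟩)),
            Or.inr (Or.inr ⟨rfl, hb, a, ha, hQ⟩)⟩ (hn2 b)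
      · rcases Q.total hadj with hQ | hQ
        · exact hQ
        · exact absurd ⟨Or.inr (Or.inl ⟨rfl, ha, b, hb, hQ⟩),
            hct a vI (Or.inr (Or.inr ⟨rfl, ha, b, hb, hP⟩))⟩ (hn2 a)
      · rcases hct a b (Or.inl ⟨ha, hb, hP⟩) with ⟨_, _, hQ⟩ | ⟨rfl, _, _⟩ | ⟨rfl, _, _⟩
        · exact hQ
        · exact absurd hvI ha
        · exact absurd hvI hb
    have hn2 : ∀ (R : AcyclicOrientation G),
        (∀ a b, OI.dir a b ↔ contractDir R I vI a b) →
        ∀ x, ¬ (contractDir R I vI vI x ∧ contractDir R I vI x vI) := by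
      rintro R eR x ⟨h1, h2⟩
      exact OI.acyclic vI (Relation.TransGen.head ((eR vI x).mpr h1)
        (Relation.TransGen.single ((eR x vI).mpr h2)))
    have heq : O₁ = O₂ := by
      apply AcyclicOrientation.ext'
      intro a b
      constructor
      · exact key O₁ O₂ (fun a ha b hb => (hagree a ha b hb).mp)
          (fun x y hx => (e2 x y).mp ((e1 x y).mpr hx)) (hn2 O₂ e2) a b
      · exact key O₂ O₁ (fun a ha b hb => (hagree a ha b hb).mpr)
          (fun x y hx => (e1 x y).mp ((e2 x y).mpr hx)) (hn2 O₁ e1) a b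
    subst heq
    simpa using ClickSeq.nil O₁
  | @cons OI Omid OF v cI' hclick hseq ih =>
    intro O₁ hagree hlin e1 e2 hcI
    obtain ⟨hsrcI, hcd⟩ := hclick
    rcases hcI v (List.mem_cons_self) with rfl | hvnI
    · -- v = vI : expand to the block L
      have hsrc : ∀ a ∉ I, ∀ x ∈ I, ¬ O₁.dir a x := fun a ha x hx hdir =>
        hsrcI a ((e1 a v).mpr (Or.inr (Or.inr ⟨rfl, ha, x, hx, hdir⟩)))
      have hseqL : ClickSeq O₁ L (O₁.flipCut I hsrc) := by
        refine clickSeq_of_list O₁ I hsrc L [] O₁ _ hnodup ?_ ?_ ?_ ?_ ?_ (fun a b => Iff.rfl)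
        · intro x; simpa using hmem x
        · intro x hx; exact absurd hx (List.not_mem_nil (a := x))
        · intro p hp; exact absurd hp (List.not_mem_nil (a := p))
        · intro a ha b hb hd; exact hlin a ((hmem a).mp ha) b ((hmem b).mp hb) hd
        · intro a b; simp
      have e' : ∀ a b, Omid.dir a b ↔ contractDir (O₁.flipCut I hsrc) I v a b := by
        intro a b
        rw [hcd a b, e1 b a, e1 a b]
        exact (contract_flip_eq O₁ I v hvI hsrc a b).symm
      have hagF : ∀ a ∈ I, ∀ b ∈ I, ((O₁.flipCut I hsrc).dir a b ↔ O₂.dir a b) := by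
        intro a ha b hb
        have hh : (O₁.flipCut I hsrc).dir a b ↔ O₁.dir a b := by
          show ((¬(a ∈ I ↔ b ∈ I) ∧ _) ∨ _) ↔ _
          simp [ha, hb]
        rw [hh]; exact hagree a ha b hb
      have hlinF : ∀ a ∈ I, ∀ b ∈ I, (O₁.flipCut I hsrc).dir a b →
          L.idxOf a < L.idxOf b := by
        intro a ha b hb hd
        apply hlin a ha b hb
        rcases hd with ⟨hne, _⟩ | ⟨_, hd⟩
        · exact absurd ⟨fun _ => hb, fun _ => ha⟩ hne
        · exact hd
      have hrest := ih (O₁.flipCut I hsrc) hagF hlinF e' e2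
        (fun x hx => hcI x (List.mem_cons_of_mem _ hx))
      have hfm : (v :: cI').flatMap (fun x => if x = v then L else [x]) =
          L ++ cI'.flatMap (fun x => if x = v then L else [x]) := by
        simp
      rw [hfm]
      exact hseqL.append hrest
    · -- v ∉ I : just click v
      have hvvI : v ≠ vI := fun hh => hvnI (hh ▸ hvI)
      have hsv : O₁.IsSource v := by
        intro a hdir
        by_cases haI : a ∈ I
        · exact hsrcI vI ((e1 vI v).mpr (Or.inr (Or.inl ⟨rfl, hvnI, a, haI, hdir⟩)))
        · exact hsrcI a ((e1 a v).mpr (Or.inl ⟨haI, hvnI, hdir⟩))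
      have e' : ∀ a b, Omid.dir a b ↔ contractDir (O₁.click v hsv) I vI a b := by
        intro a b
        rw [hcd a b, e1 b a, e1 a b]
        exact (contract_click_eq O₁ I vI hvI v hvnI hsv a b).symm
      have hagC : ∀ a ∈ I, ∀ b ∈ I, ((O₁.click v hsv).dir a b ↔ O₂.dir a b) := by
        intro a ha b hb
        have hane : a ≠ v := fun hh => hvnI (hh ▸ ha)
        have hbne : b ≠ v := fun hh => hvnI (hh ▸ hb)
        have hh : (O₁.click v hsv).dir a b ↔ O₁.dir a b := by
          show (((a = v ∨ b = v) ∧ _) ∨ _) ↔ _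
          simp [hane, hbne]
        rw [hh]; exact hagree a ha b hb
      have hlinC : ∀ a ∈ I, ∀ b ∈ I, (O₁.click v hsv).dir a b →
          L.idxOf a < L.idxOf b := by
        intro a ha b hb hd
        have hane : a ≠ v := fun hh => hvnI (hh ▸ ha)
        have hbne : b ≠ v := fun hh => hvnI (hh ▸ hb)
        rcases hd with ⟨hor, _⟩ | ⟨_, _, hd⟩
        · rcases hor with rfl | rfl
          · exact absurd rfl hane
          · exact absurd rfl hbne
        · exact hlin a ha b hb hd
      have hrest := ih (O₁.click v hsv) hagC hlinC e' e2
        (fun x hx => hcI x (List.mem_cons_of_mem _ hx))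
      have hfm : (v :: cI').flatMap (fun x => if x = vI then L else [x]) =
          v :: cI'.flatMap (fun x => if x = vI then L else [x]) := by
        simp [hvvI]
      rw [hfm]
      exact ClickSeq.cons (O₁.clickAt_click v hsv) hrest
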